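/- (Stackelberg, monotone increasing case.) If (ln τ)·(k0 − k1) ≥ 0 and k0 + k1 < 0, then r is strictly increasing on (0, ∞). -/

import Mathlib

/-- The Gaussian Q-function `Q(x) = (1/√(2π)) ∫_x^∞ exp(−t²/2) dt`. -/
noncomputable def gaussQ (x : ℝ) : ℝ :=
  (Real.sqrt (2 * Real.pi))⁻¹ * ∫ t in Set.Ioi x, Real.exp (-(t ^ 2 / 2))

lemma gauss_integrable : MeasureTheory.Integrable (fun t : ℝ => Real.exp (-(t ^ 2 / 2))) := by
  have h := integrable_exp_neg_mul_sq (by norm_num : (0:ℝ) < 1/2)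
  have he : (fun t : ℝ => Real.exp (-(t ^ 2 / 2))) = fun t : ℝ => Real.exp (-(1/2) * t ^ 2) := by
    funext t; congr 1; ring
  rw [he]; exact h

lemma gauss_continuous : Continuous (fun t : ℝ => Real.exp (-(t ^ 2 / 2))) := by
  continuity

lemma gaussQ_eq (x : ℝ) : gaussQ x = (Real.sqrt (2 * Real.pi))⁻¹ *
    ((∫ t in Set.Ioi (0:ℝ), Real.exp (-(t ^ 2 / 2))) - ∫ t in (0:ℝ)..x, Real.exp (-(t ^ 2 / 2))) := by
  unfold gaussQ
  congr 1
  have hi := gauss_integrable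
  have h1 : (∫ t in Set.Iic x, Real.exp (-(t ^ 2 / 2))) + (∫ t in Set.Ioi x, Real.exp (-(t ^ 2 / 2)))
      = ∫ t : ℝ, Real.exp (-(t ^ 2 / 2)) :=
    intervalIntegral.integral_Iic_add_Ioi hi.integrableOn hi.integrableOn
  have h2 : (∫ t in Set.Iic (0:ℝ), Real.exp (-(t ^ 2 / 2))) + (∫ t in Set.Ioi (0:ℝ), Real.exp (-(t ^ 2 / 2)))
      = ∫ t : ℝ, Real.exp (-(t ^ 2 / 2)) :=
    intervalIntegral.integral_Iic_add_Ioi hi.integrableOn hi.integrableOn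
  have h3 : (∫ t in Set.Iic x, Real.exp (-(t ^ 2 / 2))) - ∫ t in Set.Iic (0:ℝ), Real.exp (-(t ^ 2 / 2))
      = ∫ t in (0:ℝ)..x, Real.exp (-(t ^ 2 / 2)) :=
    intervalIntegral.integral_Iic_sub_Iic hi.integrableOn hi.integrableOn
  linarith

lemma hasDerivAt_gaussQ (x : ℝ) :
    HasDerivAt gaussQ (-((Real.sqrt (2 * Real.pi))⁻¹ * Real.exp (-(x ^ 2 / 2)))) x := by
  have hg : gaussQ = fun u => (Real.sqrt (2 * Real.pi))⁻¹ *
      ((∫ t in Set.Ioi (0:ℝ), Real.exp (-(t ^ 2 / 2))) - ∫ t in (0:ℝ)..u, Real.exp (-(t ^ 2 / 2))) :=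
    funext gaussQ_eq
  rw [hg]
  have hFTC : HasDerivAt (fun u => ∫ t in (0:ℝ)..u, Real.exp (-(t ^ 2 / 2)))
      (Real.exp (-(x ^ 2 / 2))) x :=
    intervalIntegral.integral_hasDerivAt_right
      (gauss_continuous.intervalIntegrable _ _)
      (gauss_continuous.stronglyMeasurableAtFilter _ _)
      gauss_continuous.continuousAt
  have h := ((hasDerivAt_const x
      (∫ t in Set.Ioi (0:ℝ), Real.exp (-(t ^ 2 / 2)))).sub hFTC).const_mul
      ((Real.sqrt (2 * Real.pi))⁻¹)
  simpa [mul_sub] using h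

/-- Stackelberg, monotone increasing case: if `(ln τ)·(k0 − k1) ≥ 0` and
`k0 + k1 < 0`, the transmitter Bayes risk is strictly increasing on `(0, ∞)`. -/
theorem stmt_8 (π0 π1 C00 C01 C10 C11 τ ζ : ℝ)
    (hπ0 : 0 < π0) (hπ1 : 0 < π1) (hτ : 0 < τ) (hζ : ζ = 1 ∨ ζ = -1)
    (k0 k1 : ℝ)
    (hk0 : k0 = π0 * ζ * (C10 - C00) * τ ^ (-(1 / 2) : ℝ))
    (hk1 : k1 = π1 * ζ * (C01 - C11) * τ ^ ((1 / 2) : ℝ))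
    (r : ℝ → ℝ)
    (hr : r = fun d : ℝ => π0 * C00 + π1 * C11
        + π0 * (C10 - C00) * gaussQ (ζ * (Real.log τ / d + d / 2))
        + π1 * (C01 - C11) * gaussQ (ζ * (-Real.log τ / d + d / 2)))
    (hcase1 : 0 ≤ Real.log τ * (k0 - k1)) (hcase2 : k0 + k1 < 0) :
    StrictMonoOn r (Set.Ioi (0 : ℝ)) := by
  set L := Real.log τ with hL
  set c := (Real.sqrt (2 * Real.pi))⁻¹ with hc
  have hζsq : ζ ^ 2 = 1 := by rcases hζ with rfl | rfl <;> norm_num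
  have hcpos : 0 < c := by
    rw [hc]
    exact inv_pos.mpr (Real.sqrt_pos.mpr (by positivity))
  -- rpow facts
  have hkm : τ ^ (-(1 / 2) : ℝ) = Real.exp (-(L / 2)) := by
    rw [Real.rpow_def_of_pos hτ, ← hL]; congr 1; ring
  have hkp : τ ^ ((1 / 2) : ℝ) = Real.exp (L / 2) := by
    rw [Real.rpow_def_of_pos hτ, ← hL]; congr 1; ring
  -- derivative of r at each d > 0
  have key : ∀ d : ℝ, 0 < d →
      HasDerivAt r (c * Real.exp (-((L ^ 2 / d ^ 2 + d ^ 2 / 4) / 2)) *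
        (-((k1 - k0) * L / d ^ 2 + (k0 + k1) / 2))) d := by
    intro d hd
    have hd0 : d ≠ 0 := ne_of_gt hd
    -- derivatives of inner functions
    have hu : HasDerivAt (fun t : ℝ => ζ * (L / t + t / 2)) (ζ * (-L / d ^ 2 + 1 / 2)) d := by
      have h1 := ((hasDerivAt_const d L).div (hasDerivAt_id d) hd0).add
        ((hasDerivAt_id d).div_const 2)
      have h1' : HasDerivAt (fun t : ℝ => L / t + t / 2) (-L / d ^ 2 + 1 / 2) d := by
        convert (show HasDerivAt (fun t : ℝ => L / t + t / 2) _ d from h1) using 1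
        simp only [id_eq]
        ring
      exact h1'.const_mul ζ
    have hv : HasDerivAt (fun t : ℝ => ζ * (-L / t + t / 2)) (ζ * (L / d ^ 2 + 1 / 2)) d := by
      have h1 := ((hasDerivAt_const d (-L)).div (hasDerivAt_id d) hd0).add
        ((hasDerivAt_id d).div_const 2)
      have h1' : HasDerivAt (fun t : ℝ => -L / t + t / 2) (L / d ^ 2 + 1 / 2) d := by
        convert (show HasDerivAt (fun t : ℝ => -L / t + t / 2) _ d from h1) using 1
        simp only [id_eq]
        ring
      exact h1'.const_mul ζ
    have hQu := (hasDerivAt_gaussQ (ζ * (L / d + d / 2))).comp d hu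
    have hQv := (hasDerivAt_gaussQ (ζ * (-L / d + d / 2))).comp d hv
    have hderiv : HasDerivAt r
        (π0 * (C10 - C00) * (-(c * Real.exp (-((ζ * (L / d + d / 2)) ^ 2 / 2))) * (ζ * (-L / d ^ 2 + 1 / 2)))
          + π1 * (C01 - C11) * (-(c * Real.exp (-((ζ * (-L / d + d / 2)) ^ 2 / 2))) * (ζ * (L / d ^ 2 + 1 / 2)))) d := by
      rw [hr]
      have h1 := ((hasDerivAt_const d (π0 * C00 + π1 * C11)).add
        (hQu.const_mul (π0 * (C10 - C00)))).add (hQv.const_mul (π1 * (C01 - C11)))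
      simpa only [Function.comp, zero_add, add_assoc, Pi.add_def, ← hc] using h1
    convert hderiv using 1
    -- algebraic identity
    have hEu : Real.exp (-((ζ * (L / d + d / 2)) ^ 2 / 2))
        = Real.exp (-((L ^ 2 / d ^ 2 + d ^ 2 / 4) / 2)) * Real.exp (-(L / 2)) := by
      rw [← Real.exp_add]
      congr 1
      rw [mul_pow, hζsq, one_mul]
      field_simp
      ring
    have hEv : Real.exp (-((ζ * (-L / d + d / 2)) ^ 2 / 2))
        = Real.exp (-((L ^ 2 / d ^ 2 + d ^ 2 / 4) / 2)) * Real.exp (L / 2) := by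
      rw [← Real.exp_add]
      congr 1
      rw [mul_pow, hζsq, one_mul]
      field_simp
      ring
    rw [hEu, hEv, hk0, hk1, hkm, hkp]
    ring
  have hcont : ContinuousOn r (Set.Ioi (0 : ℝ)) := fun d hd =>
    ((key d hd).differentiableAt.continuousAt).continuousWithinAt
  refine strictMonoOn_of_deriv_pos (convex_Ioi 0) hcont ?_
  intro d hd
  rw [interior_Ioi] at hd
  have hd' : (0:ℝ) < d := hd
  rw [(key d hd').deriv]
  have hE : 0 < Real.exp (-((L ^ 2 / d ^ 2 + d ^ 2 / 4) / 2)) := Real.exp_pos _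
  have h1 : (k1 - k0) * L ≤ 0 := by nlinarith
  have h2 : (k1 - k0) * L / d ^ 2 ≤ 0 :=
    div_nonpos_of_nonpos_of_nonneg h1 (by positivity)
  have h3 : 0 < -((k1 - k0) * L / d ^ 2 + (k0 + k1) / 2) := by linarith
  positivity
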